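/- Let Y be a free ℤ-module of finite rank and (α_i, α_i∨), i ∈ I a finite family of root/coroot pairs (α_i ∈ Hom_ℤ(Y,ℤ), α_i∨ ∈ Y, ⟨α_i, α_i∨⟩ = 2). Let Q : Y → ℤ be a quadratic form invariant under every reflection s_{α_i}(y) = y − ⟨α_i, y⟩·α_i∨. Fix a positive integer n, set n_{α_i} := n / gcd(n, Q(α_i∨)), Y_{Q,n} := {y ∈ Y : n | B_Q(y, z) for all z ∈ Y}, Y_{Q,n}^{sc} := the ℤ-span of {n_{α_i}·α_i∨ : i ∈ I}, and J := n·Y + Y_{Q,n}^{sc}. Then J ⊆ Y_{Q,n}, and n divides Q(y) for every y ∈ J. -/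

import Mathlib

/-- Let `Q` be a `ℤ`-valued quadratic form on a lattice `Y`, invariant under the
reflections of a finite family of root/coroot pairs `(α_i, α_i∨)`.  With
`Y_{Q,n} = {y : n ∣ B_Q(y, z) for all z}`, `Y_{Q,n}^{sc}` the span of the modified
coroots `n_{α_i} • α_i∨` (where `n_{α_i} = n / gcd(n, Q(α_i∨))`), and
`J = n·Y + Y_{Q,n}^{sc}`, one has `J ⊆ Y_{Q,n}` and `n ∣ Q(y)` for all `y ∈ J`. -/
theorem stmt_3 (Y : Type*) [AddCommGroup Y] [Module ℤ Y]
    [Module.Free ℤ Y] [Module.Finite ℤ Y]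
    (Q : QuadraticForm ℤ Y) (I : Type*) [Finite I]
    (α : I → (Y →ₗ[ℤ] ℤ)) (αv : I → Y)
    (hpair : ∀ i, α i (αv i) = 2)
    (hW : ∀ (i : I) (y : Y), Q (y - α i y • αv i) = Q y)
    (n : ℕ) (hn : 0 < n) :
    ∀ y ∈ (LinearMap.range ((n : ℤ) • (LinearMap.id : Y →ₗ[ℤ] Y)) ⊔
        Submodule.span ℤ
          (Set.range fun i : I => ((n / Int.gcd (n : ℤ) (Q (αv i)) : ℕ) : ℤ) • αv i)),
      (∀ z : Y, (n : ℤ) ∣ QuadraticMap.polar (⇑Q) y z) ∧ (n : ℤ) ∣ Q y := by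
  have hexp : ∀ a b : Y, Q (a + b) = Q a + Q b + QuadraticMap.polar (⇑Q) a b := by
    intro a b; simp only [QuadraticMap.polar]; ring
  -- the key equation: c * polar y v = c^2 * Q v  with c = α i y
  have hE : ∀ (i : I) (y : Y),
      (α i y) * QuadraticMap.polar (⇑Q) y (αv i) = (α i y)^2 * Q (αv i) := by
    intro i y
    have h := hW i y
    rw [← Int.cast_smul_eq_zsmul ℤ, Int.cast_id, sub_eq_add_neg, ← neg_smul,
      hexp, QuadraticMap.polar_smul_right, QuadraticMap.map_smul] at h
    simp only [smul_eq_mul] at h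
    nlinarith [h]
  -- polar (αv i) y = α i y * Q (αv i)
  have hpol : ∀ (i : I) (y : Y),
      QuadraticMap.polar (⇑Q) (αv i) y = α i y * Q (αv i) := by
    intro i y
    have h1 := hE i y
    have h2 := hE i (y + αv i)
    have hvv : QuadraticMap.polar (⇑Q) (αv i) (αv i) = 2 * Q (αv i) := by
      rw [QuadraticMap.polar_self]; simp [smul_eq_mul]
    rw [map_add, hpair, QuadraticMap.polar_add_left, QuadraticMap.polar_comm (⇑Q) (αv i),
      hvv] at h2
    have key : 2 * QuadraticMap.polar (⇑Q) y (αv i) = 2 * (α i y * Q (αv i)) := by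
      nlinarith [h1, h2]
    have := mul_left_cancel₀ (two_ne_zero (α := ℤ)) key
    rw [QuadraticMap.polar_comm]
    exact this
  -- n divides n_i * Q(αv i)
  have hdvd : ∀ i : I, (n : ℤ) ∣ ((n / Int.gcd (n : ℤ) (Q (αv i)) : ℕ) : ℤ) * Q (αv i) := by
    intro i
    set g : ℕ := Int.gcd (n : ℤ) (Q (αv i)) with hg
    have hg1 : (g : ℤ) ∣ (n : ℤ) := Int.gcd_dvd_left (n : ℤ) (Q (αv i))
    have hg2 : (g : ℤ) ∣ Q (αv i) := Int.gcd_dvd_right (n : ℤ) (Q (αv i))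
    have hgn : g ∣ n := Int.ofNat_dvd.mp hg1
    obtain ⟨k, hk⟩ := hg2
    have hng : ((n / g : ℕ) : ℤ) * g = n := by
      rw [← Nat.cast_mul, Nat.div_mul_cancel hgn]
    exact ⟨k, by rw [hk, ← mul_assoc, hng]⟩
  set P : Y → Prop := fun y =>
    (∀ z : Y, (n : ℤ) ∣ QuadraticMap.polar (⇑Q) y z) ∧ (n : ℤ) ∣ Q y with hP
  have Pzero : P 0 := by
    constructor
    · intro z; rw [QuadraticMap.polar_zero_left]; exact dvd_zero _
    · simp
  have Padd : ∀ a b, P a → P b → P (a + b) := by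
    intro a b ⟨ha1, ha2⟩ ⟨hb1, hb2⟩
    constructor
    · intro z; rw [QuadraticMap.polar_add_left]; exact dvd_add (ha1 z) (hb1 z)
    · rw [hexp]; exact dvd_add (dvd_add ha2 hb2) (ha1 b)
  -- closure under zsmul
  have Psmul : ∀ (c : ℤ) (a : Y), P a → P (c • a) := by
    intro c a ⟨ha1, ha2⟩
    rw [← Int.cast_smul_eq_zsmul ℤ c a]
    constructor
    · intro z; rw [QuadraticMap.polar_smul_left, smul_eq_mul]
      exact Dvd.dvd.mul_left (ha1 z) _
    · rw [QuadraticMap.map_smul, smul_eq_mul]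
      exact Dvd.dvd.mul_left ha2 _
  -- n • x is always in Y_{Q,n} with n ∣ Q(n • x)
  have Pn : ∀ x : Y, P ((n : ℤ) • x) := by
    intro x
    rw [← Int.cast_smul_eq_zsmul ℤ ((n : ℤ)) x]
    constructor
    · intro z; rw [QuadraticMap.polar_smul_left, smul_eq_mul]
      exact ⟨QuadraticMap.polar (⇑Q) x z, by push_cast; ring⟩
    · rw [QuadraticMap.map_smul, smul_eq_mul]
      exact ⟨(n : ℤ) * Q x, by push_cast; ring⟩
  intro y hy
  rcases Submodule.mem_sup.mp hy with ⟨a, ha, b, hb, rfl⟩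
  apply Padd
  · obtain ⟨x, rfl⟩ := ha
    exact Pn x
  · refine Submodule.span_induction ?_ Pzero (fun u v _ _ => Padd u v)
      (fun c u _ hu => (Int.cast_smul_eq_zsmul ℤ c u).symm ▸ Psmul c u hu) hb
    rintro _ ⟨i, rfl⟩
    simp only
    rw [← Int.cast_smul_eq_zsmul ℤ ((n / Int.gcd (n : ℤ) (Q (αv i)) : ℕ) : ℤ) (αv i)]
    constructor
    · intro z
      rw [QuadraticMap.polar_smul_left, smul_eq_mul, hpol]
      have h2 : (n : ℤ) ∣ ((n / Int.gcd (n : ℤ) (Q (αv i)) : ℕ) : ℤ) * Q (αv i) * α i z :=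
        Dvd.dvd.mul_right (hdvd i) _
      refine Dvd.dvd.trans h2 (dvd_of_eq ?_)
      push_cast
      ring
    · rw [QuadraticMap.map_smul, smul_eq_mul]
      obtain ⟨k, hk⟩ := hdvd i
      refine ⟨((n / Int.gcd (n : ℤ) (Q (αv i)) : ℕ) : ℤ) * k, ?_⟩
      simp only [Int.cast_natCast]
      linear_combination ((n / Int.gcd (n : ℤ) (Q (αv i)) : ℕ) : ℤ) * hk
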